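/- Comparison of trigonometric and piecewise-constant interpolation: for a lattice function S : {z_0,...,z_{N-1}} → ℂ with N = 2n+1 and Fourier interpolation coefficients Ŝ(k) (|k| ≤ n), the L² distance between the trigonometric interpolation S̃ and the piecewise constant interpolation Σ (equal to S(z_j) on the arc of angular width 2π/N centered at z_j) is given exactly by ‖S̃ - Σ‖²_{L²(𝕊)} = 2 ∑_{k=-n}^n |Ŝ(k)|² (1 - sinc(kπ/N)). -/

import Mathlib

open Complex Finset

noncomputable def sinc (x : ℝ) : ℝ := if x = 0 then 1 else Real.sin x / x

lemma sinc_zero : sinc 0 = 1 := by simp [sinc]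

lemma sinc_neg (x : ℝ) : sinc (-x) = sinc x := by
  rcases eq_or_ne x 0 with h | h
  · simp [h]
  · simp [sinc, h, neg_div_neg_eq]

-- geometric sum of root of unity
lemma geom_root (ω : ℂ) (N : ℕ) (h1 : ω ^ N = 1) (h2 : ω ≠ 1) :
    ∑ i ∈ Finset.range N, ω ^ i = 0 := by
  rw [geom_sum_eq h2, h1, sub_self, zero_div]

lemma root_pow (N : ℕ) (hN : N ≠ 0) (m : ℤ) :
    (Complex.exp (2 * Real.pi * I * m / N)) ^ N = 1 := by
  rw [← Complex.exp_nat_mul]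
  have : (N : ℂ) * (2 * Real.pi * I * m / N) = m * (2 * Real.pi * I) := by
    have hN' : (N : ℂ) ≠ 0 := Nat.cast_ne_zero.mpr hN
    field_simp
  rw [this, Complex.exp_int_mul_two_pi_mul_I]

lemma root_ne_one (N : ℕ) (hN : N ≠ 0) (m : ℤ) (hm : ¬ (N : ℤ) ∣ m) :
    Complex.exp (2 * Real.pi * I * m / N) ≠ 1 := by
  intro h
  rw [Complex.exp_eq_one_iff] at h
  obtain ⟨t, ht⟩ := h
  apply hm
  refine ⟨t, ?_⟩
  have hN' : (N : ℂ) ≠ 0 := Nat.cast_ne_zero.mpr hN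
  have hI : (2 : ℂ) * Real.pi * I ≠ 0 := by
    simp [Real.pi_ne_zero, Complex.I_ne_zero]
  have : (m : ℂ) = N * t := by
    field_simp at ht
    apply mul_left_cancel₀ hI
    linear_combination (2 * (Real.pi : ℂ) * I) * ht
  exact_mod_cast this

-- orthogonality over j : Fin N
lemma orth_j (N : ℕ) (hN : N ≠ 0) (m : ℤ) (hm : ¬ (N : ℤ) ∣ m) :
    ∑ j : Fin N, Complex.exp (2 * Real.pi * I * m * j / N) = 0 := by
  have key : ∀ j : Fin N, Complex.exp (2 * Real.pi * I * m * j / N)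
      = (Complex.exp (2 * Real.pi * I * m / N)) ^ (j : ℕ) := by
    intro j
    rw [← Complex.exp_nat_mul]
    congr 1
    push_cast
    ring
  simp only [key]
  rw [Fin.sum_univ_eq_sum_range]
  exact geom_root _ N (root_pow N hN m) (root_ne_one N hN m hm)

-- orthogonality over k ∈ Icc (-n) n, N = 2n+1
lemma orth_k (n : ℕ) (m : ℤ) (hm : ¬ ((2*n+1 : ℕ) : ℤ) ∣ m) :
    ∑ k ∈ Finset.Icc (-(n:ℤ)) (n:ℤ),
      Complex.exp (2 * Real.pi * I * m * k / (2*n+1 : ℕ)) = 0 := by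
  set N : ℕ := 2*n+1 with hNdef
  have hN : N ≠ 0 := by omega
  set ω : ℂ := Complex.exp (2 * Real.pi * I * m / N) with hω
  have hω0 : ω ≠ 0 := Complex.exp_ne_zero _
  have key : ∀ k : ℤ, Complex.exp (2 * Real.pi * I * m * k / N) = ω ^ k := by
    intro k
    rw [hω, ← Complex.exp_int_mul]
    congr 1
    push_cast
    ring
  simp only [key]
  have reidx : ∑ k ∈ Finset.Icc (-(n:ℤ)) (n:ℤ), ω ^ k
      = ∑ i ∈ Finset.range N, ω ^ (-(n:ℤ)) * ω ^ i := by
    refine Finset.sum_nbij' (fun k => (k + n).toNat) (fun i => (i : ℤ) - n) ?_ ?_ ?_ ?_ ?_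
    · intro k hk
      simp only [Finset.mem_Icc] at hk
      simp only [Finset.mem_range]
      omega
    · intro i hi
      simp only [Finset.mem_range] at hi
      simp only [Finset.mem_Icc]
      omega
    · intro k hk
      simp only [Finset.mem_Icc] at hk
      omega
    · intro i hi
      simp only [Finset.mem_range] at hi
      omega
    · intro k hk
      simp only [Finset.mem_Icc] at hk
      rw [← zpow_natCast, ← zpow_add₀ hω0]
      congr 1
      omega
  rw [reidx, ← Finset.mul_sum]
  rw [geom_root ω N (by rw [hω]; exact root_pow N hN m) (root_ne_one N hN m hm), mul_zero]

lemma integral_exp_arc (m : ℤ) (b a : ℝ) :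
    ∫ θ in (b - a)..(b + a), Complex.exp (I * m * θ)
      = Complex.exp (I * m * b) * (2 * a * ((sinc ((m : ℝ) * a) : ℝ) : ℂ)) := by
  rcases eq_or_ne m 0 with hm | hm
  · simp [hm, sinc_zero]
    norm_num
    push_cast
    ring
  · have hc : (I * (m : ℂ)) ≠ 0 := by
      simp [Complex.I_ne_zero, Int.cast_injective.ne_iff.mpr hm]
      exact_mod_cast hm
    have : ∀ θ : ℝ, Complex.exp (I * m * θ) = Complex.exp ((I * m) * θ) := by
      intro θ; ring_nf
    calc ∫ θ in (b - a)..(b + a), Complex.exp (I * m * θ)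
        = (Complex.exp ((I * m) * (b+a)) - Complex.exp ((I * m) * (b-a))) / (I * m) := by
          rw [integral_exp_mul_complex hc]
          push_cast
          ring_nf
      _ = Complex.exp (I * m * b) * (2 * a * ((sinc ((m : ℝ) * a) : ℝ) : ℂ)) := by
          rcases eq_or_ne a 0 with ha | ha
          · simp [ha]
          · have hma : ((m : ℝ) * a) ≠ 0 := by
              apply mul_ne_zero _ ha
              exact_mod_cast hm
            rw [show ((I * m) * ((b:ℝ)+a) : ℂ) = I * m * b + ((m*a : ℝ)) * I by push_cast; ring,
               show ((I * m) * ((b:ℝ)-a) : ℂ) = I * m * b + (-(m*a : ℝ)) * I by push_cast; ring,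
               Complex.exp_add, Complex.exp_add, ← mul_sub]
            rw [Complex.exp_mul_I, Complex.exp_mul_I]
            rw [mul_div_assoc]
            congr 1
            rw [Complex.cos_neg, Complex.sin_neg]
            have hsin : (Complex.sin ((m*a : ℝ) : ℂ)) = ((Real.sin ((m:ℝ)*a) : ℝ) : ℂ) := by
              rw [Complex.ofReal_sin]
            rw [sinc, if_neg hma]
            rw [div_eq_iff hc, hsin]
            have hm' : ((m:ℝ) : ℂ) ≠ 0 := by
              simp only [ne_eq, Complex.ofReal_eq_zero, Int.cast_eq_zero]
              exact hm
            have ha' : ((a:ℝ) : ℂ) ≠ 0 := Complex.ofReal_ne_zero.mpr ha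
            push_cast
            field_simp
            have hden : ((m:ℂ) * (a:ℂ)) ≠ 0 :=
              mul_ne_zero (by exact_mod_cast hm) ha'
            ring

lemma arc_integral (k l : ℤ) (b a : ℝ) :
    (∫ θ in (b - a)..(b + a),
      (Complex.exp (I * k * θ) - Complex.exp (I * k * b)) *
        (Complex.exp (I * (-l : ℤ) * θ) - Complex.exp (I * (-l : ℤ) * b)))
      = Complex.exp (I * ((k - l : ℤ)) * b) * (2 * a) *
          ((sinc (((k - l : ℤ) : ℝ) * a) - sinc ((l : ℝ) * a) - sinc ((k : ℝ) * a) + 1 : ℝ) : ℂ) := by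
  have hcont : ∀ m : ℤ, Continuous fun θ : ℝ => Complex.exp (I * m * θ) := by
    intro m; fun_prop
  have hint : ∀ m : ℤ, IntervalIntegrable (fun θ : ℝ => Complex.exp (I * m * θ))
      MeasureTheory.volume (b - a) (b + a) := fun m => (hcont m).intervalIntegrable _ _
  have key : ∀ θ : ℝ,
      (Complex.exp (I * k * θ) - Complex.exp (I * k * b)) *
        (Complex.exp (I * (-l : ℤ) * θ) - Complex.exp (I * (-l : ℤ) * b))
      = Complex.exp (I * ((k - l : ℤ)) * θ)
        - Complex.exp (I * k * b) * Complex.exp (I * (-l : ℤ) * θ)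
        - Complex.exp (I * (-l : ℤ) * b) * Complex.exp (I * k * θ)
        + Complex.exp (I * ((k - l : ℤ)) * b) := by
    intro θ
    have e1 : Complex.exp (I * ((k - l : ℤ)) * (θ : ℝ))
        = Complex.exp (I * k * (θ : ℝ)) * Complex.exp (I * (-l : ℤ) * (θ : ℝ)) := by
      rw [← Complex.exp_add]; congr 1; push_cast; ring
    have e2 : Complex.exp (I * ((k - l : ℤ)) * (b : ℝ))
        = Complex.exp (I * k * (b : ℝ)) * Complex.exp (I * (-l : ℤ) * (b : ℝ)) := by
      rw [← Complex.exp_add]; congr 1; push_cast; ring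
    rw [e1, e2]; ring
  simp only [key]
  rw [intervalIntegral.integral_add (((hint _).sub ((hint _).const_mul _)).sub
        ((hint _).const_mul _)) intervalIntegrable_const,
      intervalIntegral.integral_sub ((hint _).sub ((hint _).const_mul _)) ((hint _).const_mul _),
      intervalIntegral.integral_sub (hint _) ((hint _).const_mul _),
      intervalIntegral.integral_const_mul, intervalIntegral.integral_const_mul,
      intervalIntegral.integral_const,
      integral_exp_arc, integral_exp_arc, integral_exp_arc]
  rw [show ((-l : ℤ) : ℝ) * a = -((l : ℝ) * a) by push_cast; ring, sinc_neg,
      show b + a - (b - a) = 2 * a by ring, Complex.real_smul]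
  have e2 : Complex.exp (I * ((k - l : ℤ)) * (b : ℝ))
      = Complex.exp (I * k * (b : ℝ)) * Complex.exp (I * (-l : ℤ) * (b : ℝ)) := by
    rw [← Complex.exp_add]; congr 1; push_cast; ring
  rw [e2]
  push_cast
  ring

lemma not_dvd_small (n : ℕ) (m : ℤ) (hm : m ≠ 0) (habs : |m| < ((2*n+1 : ℕ) : ℤ)) :
    ¬ ((2*n+1 : ℕ) : ℤ) ∣ m :=
  fun h => hm (Int.eq_zero_of_abs_lt_dvd h habs)

lemma inv_dft (n : ℕ) (S : Fin (2*n+1) → ℂ) (c : ℤ → ℂ)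
    (hc : ∀ k : ℤ, c k = (1 / ((2*n+1 : ℕ) : ℂ)) *
      ∑ j : Fin (2*n+1), S j * Complex.exp (-(2 * Real.pi * Complex.I * (j : ℕ) * k / (2*n+1 : ℕ))))
    (j : Fin (2*n+1)) :
    ∑ k ∈ Finset.Icc (-(n:ℤ)) (n:ℤ),
        c k * Complex.exp (I * k * ((2 * Real.pi * (j:ℕ) / (2*n+1:ℕ) : ℝ) : ℂ))
      = S j := by
  have hNc : ((2*n+1 : ℕ) : ℂ) ≠ 0 := Nat.cast_ne_zero.mpr (by omega)
  calc ∑ k ∈ Finset.Icc (-(n:ℤ)) (n:ℤ),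
        c k * Complex.exp (I * k * ((2 * Real.pi * (j:ℕ) / (2*n+1:ℕ) : ℝ) : ℂ))
      = ∑ k ∈ Finset.Icc (-(n:ℤ)) (n:ℤ), ∑ j' : Fin (2*n+1),
          S j' * ((1/((2*n+1:ℕ):ℂ)) *
            Complex.exp (2 * Real.pi * I * ((((j:ℕ):ℤ) - ((j':ℕ):ℤ) : ℤ)) * k / (2*n+1:ℕ))) := by
        refine Finset.sum_congr rfl fun k _ => ?_
        rw [hc k, Finset.mul_sum, Finset.sum_mul]
        refine Finset.sum_congr rfl fun j' _ => ?_
        have he : Complex.exp (-(2 * Real.pi * Complex.I * (j' : ℕ) * k / (2*n+1 : ℕ))) *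
            Complex.exp (I * k * ((2 * Real.pi * (j:ℕ) / (2*n+1:ℕ) : ℝ) : ℂ))
            = Complex.exp (2 * Real.pi * I * ((((j:ℕ):ℤ) - ((j':ℕ):ℤ) : ℤ)) * k / (2*n+1:ℕ)) := by
          rw [← Complex.exp_add]
          congr 1
          push_cast
          field_simp
          ring
        rw [← he]
        ring
    _ = ∑ j' : Fin (2*n+1), S j' * ((1/((2*n+1:ℕ):ℂ)) *
          ∑ k ∈ Finset.Icc (-(n:ℤ)) (n:ℤ),
            Complex.exp (2 * Real.pi * I * ((((j:ℕ):ℤ) - ((j':ℕ):ℤ) : ℤ)) * k / (2*n+1:ℕ))) := by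
        rw [Finset.sum_comm]
        exact Finset.sum_congr rfl fun j' _ => by rw [Finset.mul_sum, Finset.mul_sum]
    _ = S j := by
        rw [Finset.sum_eq_single j]
        · have : (((j:ℕ):ℤ) - ((j:ℕ):ℤ) : ℤ) = 0 := sub_self _
          rw [this]
          simp only [Int.cast_zero, mul_zero, zero_mul, zero_div, Complex.exp_zero]
          rw [Finset.sum_const, Int.card_Icc]
          have hcard : ((n:ℤ) + 1 - -(n:ℤ)).toNat = 2*n+1 := by omega
          rw [hcard]
          simp only [nsmul_eq_mul, mul_one]
          have h21 : ((2*n+1:ℕ):ℂ) = 2*(n:ℂ)+1 := by push_cast; ring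
          field_simp
        · intro j' _ hj'
          rw [orth_k n _ (not_dvd_small n _ ?_ ?_)]
          · simp
          · simp only [ne_eq, sub_eq_zero]
            intro h
            exact hj' (Fin.ext (by exact_mod_cast h.symm))
          · have h1 : ((j:ℕ):ℤ) < ((2*n+1:ℕ):ℤ) := by exact_mod_cast j.isLt
            have h2 : ((j':ℕ):ℤ) < ((2*n+1:ℕ):ℤ) := by exact_mod_cast j'.isLt
            have h3 : 0 ≤ ((j:ℕ):ℤ) := by positivity
            have h4 : 0 ≤ ((j':ℕ):ℤ) := by positivity
            rw [abs_lt]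
            omega
        · intro h
          exact absurd (Finset.mem_univ j) h

lemma per_j (n : ℕ) (c : ℤ → ℂ) (b a : ℝ) :
    (∫ θ in (b - a)..(b + a),
       (‖((∑ k ∈ Finset.Icc (-(n:ℤ)) (n:ℤ), c k * Complex.exp (I * k * θ))
          - ∑ k ∈ Finset.Icc (-(n:ℤ)) (n:ℤ), c k * Complex.exp (I * k * (b:ℝ)))‖) ^ 2)
    = (∑ k ∈ Finset.Icc (-(n:ℤ)) (n:ℤ), ∑ l ∈ Finset.Icc (-(n:ℤ)) (n:ℤ),
        (c k * (starRingEnd ℂ) (c l)) * (Complex.exp (I * ((k - l : ℤ)) * b) * (2 * a) *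
          ((sinc (((k - l : ℤ) : ℝ) * a) - sinc ((l:ℝ) * a) - sinc ((k:ℝ) * a) + 1 : ℝ) : ℂ))).re := by
  set K := Finset.Icc (-(n:ℤ)) (n:ℤ) with hK
  set H : ℝ → ℂ := fun θ =>
    (∑ k ∈ K, c k * (Complex.exp (I * k * θ) - Complex.exp (I * k * (b:ℝ)))) *
      ∑ l ∈ K, (starRingEnd ℂ) (c l) *
        (Complex.exp (I * (-l : ℤ) * θ) - Complex.exp (I * (-l : ℤ) * (b:ℝ))) with hH
  have hDef : ∀ θ : ℝ,
      (‖((∑ k ∈ K, c k * Complex.exp (I * k * θ))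
          - ∑ k ∈ K, c k * Complex.exp (I * k * (b:ℝ)))‖) ^ 2 = (H θ).re := by
    intro θ
    have hD : (∑ k ∈ K, c k * Complex.exp (I * k * θ))
          - ∑ k ∈ K, c k * Complex.exp (I * k * (b:ℝ))
        = ∑ k ∈ K, c k * (Complex.exp (I * k * θ) - Complex.exp (I * k * (b:ℝ))) := by
      rw [← Finset.sum_sub_distrib]
      exact Finset.sum_congr rfl fun k _ => (mul_sub _ _ _).symm
    rw [hD]
    rw [show ∀ z : ℂ, (‖z‖) ^ 2 = (z * (starRingEnd ℂ) z).re from fun z => by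
      rw [Complex.mul_conj, Complex.sq_norm, Complex.ofReal_re]]
    congr 2
    rw [map_sum]
    refine Finset.sum_congr rfl fun l _ => ?_
    rw [map_mul, map_sub, ← Complex.exp_conj, ← Complex.exp_conj]
    congr 2 <;>
    · simp only [map_mul, Complex.conj_I, Complex.conj_ofReal, map_intCast]
      push_cast
      ring
  have hHcont : Continuous H := by
    apply Continuous.mul
    · apply continuous_finset_sum
      intro k _
      fun_prop
    · apply continuous_finset_sum
      intro l _
      fun_prop
  simp only [hDef]
  have hint : IntervalIntegrable H MeasureTheory.volume (b - a) (b + a) :=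
    hHcont.intervalIntegrable _ _
  have hre := ContinuousLinearMap.intervalIntegral_comp_comm Complex.reCLM hint
  simp only [Complex.reCLM_apply] at hre
  rw [hre]
  congr 1
  rw [hH]
  have hprod : ∀ θ : ℝ, H θ = ∑ k ∈ K, ∑ l ∈ K,
      (c k * (starRingEnd ℂ) (c l)) *
        ((Complex.exp (I * k * θ) - Complex.exp (I * k * (b:ℝ))) *
          (Complex.exp (I * (-l : ℤ) * θ) - Complex.exp (I * (-l : ℤ) * (b:ℝ)))) := by
    intro θ
    rw [hH]
    dsimp only
    rw [Finset.sum_mul_sum]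
    exact Finset.sum_congr rfl fun k _ => Finset.sum_congr rfl fun l _ => by ring
  calc (∫ θ in (b-a)..(b+a), H θ)
      = ∑ k ∈ K, ∑ l ∈ K, (c k * (starRingEnd ℂ) (c l)) *
          ∫ θ in (b-a)..(b+a),
            ((Complex.exp (I * k * θ) - Complex.exp (I * k * (b:ℝ))) *
              (Complex.exp (I * (-l : ℤ) * θ) - Complex.exp (I * (-l : ℤ) * (b:ℝ)))) := by
        simp only [hprod]
        rw [intervalIntegral.integral_finset_sum]
        · refine Finset.sum_congr rfl fun k _ => ?_
          rw [intervalIntegral.integral_finset_sum]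
          · exact Finset.sum_congr rfl fun l _ => intervalIntegral.integral_const_mul _ _
          · intro l _
            apply Continuous.intervalIntegrable
            fun_prop
        · intro k _
          apply Continuous.intervalIntegrable
          apply continuous_finset_sum
          intro l _
          fun_prop
    _ = _ := by
        refine Finset.sum_congr rfl fun k _ => Finset.sum_congr rfl fun l _ => ?_
        rw [arc_integral]

theorem trig_vs_piecewise_constant (n N : ℕ) (hN : N = 2 * n + 1)
    (S : Fin N → ℂ) (c : ℤ → ℂ)
    (hc : ∀ k : ℤ, c k = (1 / (N : ℂ)) *
      ∑ j : Fin N, S j * Complex.exp (-(2 * Real.pi * Complex.I * (j : ℕ) * k / N))) :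
    (1 / (2 * Real.pi)) *
      ∑ j : Fin N,
        (∫ θ in (2 * Real.pi * (j : ℕ) / N - Real.pi / N)..(2 * Real.pi * (j : ℕ) / N + Real.pi / N),
          (‖(∑ k ∈ Finset.Icc (-(n : ℤ)) (n : ℤ),
            c k * Complex.exp (Complex.I * k * θ)) - S j‖) ^ 2) =
      2 * ∑ k ∈ Finset.Icc (-(n : ℤ)) (n : ℤ),
        (‖c k‖) ^ 2 * (1 - sinc ((k : ℝ) * Real.pi / N)) := by
  subst hN
  have hN0 : (2*n+1 : ℕ) ≠ 0 := by omega
  have hNC : ((2*n+1 : ℕ) : ℂ) ≠ 0 := Nat.cast_ne_zero.mpr hN0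
  have hNC' : (2*(n:ℂ)+1) ≠ 0 := by push_cast at hNC; exact hNC
  have hSj : ∀ j : Fin (2*n+1), S j = ∑ k ∈ Finset.Icc (-(n:ℤ)) (n:ℤ),
      c k * Complex.exp (I * k * ((2 * Real.pi * (j:ℕ) / (2*n+1:ℕ) : ℝ) : ℂ)) :=
    fun j => (inv_dft n S c hc j).symm
  simp only [hSj]
  have hper : ∀ j : Fin (2*n+1),
      (∫ θ in (2 * Real.pi * (j : ℕ) / (2*n+1:ℕ) - Real.pi / (2*n+1:ℕ))..(2 * Real.pi * (j : ℕ) / (2*n+1:ℕ) + Real.pi / (2*n+1:ℕ)),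
          (‖((∑ k ∈ Finset.Icc (-(n : ℤ)) (n : ℤ),
            c k * Complex.exp (Complex.I * k * θ))
            - ∑ k ∈ Finset.Icc (-(n:ℤ)) (n:ℤ),
                c k * Complex.exp (I * k * ((2 * Real.pi * (j:ℕ) / (2*n+1:ℕ) : ℝ) : ℂ)))‖) ^ 2)
      = (∑ k ∈ Finset.Icc (-(n:ℤ)) (n:ℤ), ∑ l ∈ Finset.Icc (-(n:ℤ)) (n:ℤ),
          (c k * (starRingEnd ℂ) (c l)) *
            (Complex.exp (I * ((k - l : ℤ)) * ((2 * Real.pi * (j:ℕ) / (2*n+1:ℕ) : ℝ) : ℂ)) *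
              (2 * ((Real.pi / (2*n+1:ℕ) : ℝ) : ℂ)) *
              ((sinc (((k - l : ℤ) : ℝ) * (Real.pi / (2*n+1:ℕ))) -
                sinc ((l:ℝ) * (Real.pi / (2*n+1:ℕ))) -
                sinc ((k:ℝ) * (Real.pi / (2*n+1:ℕ))) + 1 : ℝ) : ℂ))).re :=
    fun j => per_j n c (2 * Real.pi * (j : ℕ) / (2*n+1:ℕ)) (Real.pi / (2*n+1:ℕ))
  simp only [hper]
  rw [← Complex.re_sum]
  have horth : ∀ k l : ℤ, l ≠ k → l ∈ Finset.Icc (-(n:ℤ)) (n:ℤ) → k ∈ Finset.Icc (-(n:ℤ)) (n:ℤ) →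
      ∑ j : Fin (2*n+1),
        Complex.exp (I * ((k - l : ℤ)) * ((2 * Real.pi * (j:ℕ) / (2*n+1:ℕ) : ℝ) : ℂ)) = 0 := by
    intro k l h hl hk
    have hcast : ∀ j : Fin (2*n+1),
        Complex.exp (I * ((k - l : ℤ)) * ((2 * Real.pi * (j:ℕ) / (2*n+1:ℕ) : ℝ) : ℂ))
        = Complex.exp (2 * Real.pi * I * ((k - l : ℤ)) * (j:ℕ) / (2*n+1:ℕ)) := by
      intro j; congr 1; push_cast; ring
    simp only [hcast]
    apply orth_j _ hN0
    apply not_dvd_small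
    · exact sub_ne_zero_of_ne fun hh => h hh.symm
    · simp only [Finset.mem_Icc] at hl hk
      rw [abs_lt]
      constructor <;> push_cast <;> omega
  have inner : ∀ k ∈ Finset.Icc (-(n:ℤ)) (n:ℤ),
      (∑ j : Fin (2*n+1), ∑ l ∈ Finset.Icc (-(n:ℤ)) (n:ℤ),
        (c k * (starRingEnd ℂ) (c l)) *
          (Complex.exp (I * ((k - l : ℤ)) * ((2 * Real.pi * (j:ℕ) / (2*n+1:ℕ) : ℝ) : ℂ)) *
            (2 * ((Real.pi / (2*n+1:ℕ) : ℝ) : ℂ)) *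
            ((sinc (((k - l : ℤ) : ℝ) * (Real.pi / (2*n+1:ℕ))) -
              sinc ((l:ℝ) * (Real.pi / (2*n+1:ℕ))) -
              sinc ((k:ℝ) * (Real.pi / (2*n+1:ℕ))) + 1 : ℝ) : ℂ)))
      = ((2 * Real.pi * (2 * ((‖(c k)‖) ^ 2 *
          (1 - sinc ((k : ℝ) * Real.pi / (2*n+1:ℕ))))) : ℝ) : ℂ) := by
    intro k hk
    rw [Finset.sum_comm]
    have hl' : ∀ l ∈ Finset.Icc (-(n:ℤ)) (n:ℤ),
        (∑ j : Fin (2*n+1),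
          (c k * (starRingEnd ℂ) (c l)) *
            (Complex.exp (I * ((k - l : ℤ)) * ((2 * Real.pi * (j:ℕ) / (2*n+1:ℕ) : ℝ) : ℂ)) *
              (2 * ((Real.pi / (2*n+1:ℕ) : ℝ) : ℂ)) *
              ((sinc (((k - l : ℤ) : ℝ) * (Real.pi / (2*n+1:ℕ))) -
                sinc ((l:ℝ) * (Real.pi / (2*n+1:ℕ))) -
                sinc ((k:ℝ) * (Real.pi / (2*n+1:ℕ))) + 1 : ℝ) : ℂ)))
        = if l = k then
            (c k * (starRingEnd ℂ) (c k)) * (2 * ((Real.pi / (2*n+1:ℕ) : ℝ) : ℂ)) *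
              ((sinc (((k - k : ℤ) : ℝ) * (Real.pi / (2*n+1:ℕ))) -
                sinc ((k:ℝ) * (Real.pi / (2*n+1:ℕ))) -
                sinc ((k:ℝ) * (Real.pi / (2*n+1:ℕ))) + 1 : ℝ) : ℂ) * ((2*n+1:ℕ) : ℂ)
          else 0 := by
      intro l hl
      by_cases h : l = k
      · subst h
        rw [if_pos rfl]
        have hE : ∀ j : Fin (2*n+1),
            Complex.exp (I * ((l - l : ℤ)) * ((2 * Real.pi * (j:ℕ) / (2*n+1:ℕ) : ℝ) : ℂ)) = 1 := by
          intro j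
          rw [sub_self]
          simp
        calc (∑ j : Fin (2*n+1),
              (c l * (starRingEnd ℂ) (c l)) *
                (Complex.exp (I * ((l - l : ℤ)) * ((2 * Real.pi * (j:ℕ) / (2*n+1:ℕ) : ℝ) : ℂ)) *
                  (2 * ((Real.pi / (2*n+1:ℕ) : ℝ) : ℂ)) *
                  ((sinc (((l - l : ℤ) : ℝ) * (Real.pi / (2*n+1:ℕ))) -
                    sinc ((l:ℝ) * (Real.pi / (2*n+1:ℕ))) -
                    sinc ((l:ℝ) * (Real.pi / (2*n+1:ℕ))) + 1 : ℝ) : ℂ)))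
            = ∑ _j : Fin (2*n+1),
              (c l * (starRingEnd ℂ) (c l)) * (2 * ((Real.pi / (2*n+1:ℕ) : ℝ) : ℂ)) *
                ((sinc (((l - l : ℤ) : ℝ) * (Real.pi / (2*n+1:ℕ))) -
                  sinc ((l:ℝ) * (Real.pi / (2*n+1:ℕ))) -
                  sinc ((l:ℝ) * (Real.pi / (2*n+1:ℕ))) + 1 : ℝ) : ℂ) :=
              Finset.sum_congr rfl fun j _ => by rw [hE j]; ring
          _ = _ := by
              rw [Finset.sum_const, Finset.card_univ, Fintype.card_fin, nsmul_eq_mul]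
              ring
      · rw [if_neg h]
        calc (∑ j : Fin (2*n+1),
              (c k * (starRingEnd ℂ) (c l)) *
                (Complex.exp (I * ((k - l : ℤ)) * ((2 * Real.pi * (j:ℕ) / (2*n+1:ℕ) : ℝ) : ℂ)) *
                  (2 * ((Real.pi / (2*n+1:ℕ) : ℝ) : ℂ)) *
                  ((sinc (((k - l : ℤ) : ℝ) * (Real.pi / (2*n+1:ℕ))) -
                    sinc ((l:ℝ) * (Real.pi / (2*n+1:ℕ))) -
                    sinc ((k:ℝ) * (Real.pi / (2*n+1:ℕ))) + 1 : ℝ) : ℂ)))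
            = (c k * (starRingEnd ℂ) (c l)) *
                ((2 * ((Real.pi / (2*n+1:ℕ) : ℝ) : ℂ)) *
                ((sinc (((k - l : ℤ) : ℝ) * (Real.pi / (2*n+1:ℕ))) -
                  sinc ((l:ℝ) * (Real.pi / (2*n+1:ℕ))) -
                  sinc ((k:ℝ) * (Real.pi / (2*n+1:ℕ))) + 1 : ℝ) : ℂ)) *
                ∑ j : Fin (2*n+1),
                  Complex.exp (I * ((k - l : ℤ)) * ((2 * Real.pi * (j:ℕ) / (2*n+1:ℕ) : ℝ) : ℂ)) := by
              rw [Finset.mul_sum]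
              exact Finset.sum_congr rfl fun j _ => by ring
          _ = 0 := by rw [horth k l h hl hk, mul_zero]
    rw [Finset.sum_congr rfl hl', Finset.sum_ite_eq' _ k, if_pos hk]
    rw [Complex.mul_conj, ← Complex.sq_norm]
    rw [show ((k - k : ℤ) : ℝ) = 0 by push_cast; ring, zero_mul, sinc_zero]
    rw [show (k:ℝ) * (Real.pi / ((2*n+1:ℕ):ℝ)) = (k:ℝ) * Real.pi / ((2*n+1:ℕ):ℝ) from
      (mul_div_assoc _ _ _).symm]
    push_cast
    field_simp
    ring
  have key : (∑ j : Fin (2*n+1), ∑ k ∈ Finset.Icc (-(n:ℤ)) (n:ℤ), ∑ l ∈ Finset.Icc (-(n:ℤ)) (n:ℤ),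
        (c k * (starRingEnd ℂ) (c l)) *
          (Complex.exp (I * ((k - l : ℤ)) * ((2 * Real.pi * (j:ℕ) / (2*n+1:ℕ) : ℝ) : ℂ)) *
            (2 * ((Real.pi / (2*n+1:ℕ) : ℝ) : ℂ)) *
            ((sinc (((k - l : ℤ) : ℝ) * (Real.pi / (2*n+1:ℕ))) -
              sinc ((l:ℝ) * (Real.pi / (2*n+1:ℕ))) -
              sinc ((k:ℝ) * (Real.pi / (2*n+1:ℕ))) + 1 : ℝ) : ℂ)))
      = ((2 * Real.pi * (2 * ∑ k ∈ Finset.Icc (-(n : ℤ)) (n : ℤ),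
          (‖(c k)‖) ^ 2 * (1 - sinc ((k : ℝ) * Real.pi / (2*n+1:ℕ)))) : ℝ) : ℂ) := by
    rw [Finset.sum_comm, Finset.sum_congr rfl inner]
    rw [show (2 * Real.pi * (2 * ∑ k ∈ Finset.Icc (-(n : ℤ)) (n : ℤ),
          (‖(c k)‖) ^ 2 * (1 - sinc ((k : ℝ) * Real.pi / (2*n+1:ℕ)))) : ℝ)
        = ∑ k ∈ Finset.Icc (-(n : ℤ)) (n : ℤ),
            2 * Real.pi * (2 * ((‖(c k)‖) ^ 2 *
              (1 - sinc ((k : ℝ) * Real.pi / (2*n+1:ℕ))))) from by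
      rw [Finset.mul_sum, Finset.mul_sum]]
    rw [Complex.ofReal_sum]
  rw [key, Complex.ofReal_re, ← mul_assoc, one_div,
    inv_mul_cancel₀ (by positivity : (2*Real.pi) ≠ 0), one_mul]
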